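/- Let Z be a real m×n matrix and let r ≥ rank(Z). Then the nuclear norm of Z equals the minimum of (1/2)(‖A‖_F² + ‖B‖_F²) over all factorizations Z = ABᵀ with A an m×r real matrix and B an n×r real matrix; that is, ‖Z‖_* = min_{A,B : Z = ABᵀ} (1/2)(‖A‖_F² + ‖B‖_F²). In particular, for every such factorization ‖ABᵀ‖_* ≤ (1/2)(‖A‖_F² + ‖B‖_F²), and equality holds when A = UD^{1/2} and B = VD^{1/2} where UDVᵀ is a singular value decomposition of Z. -/

import Mathlib

noncomputable section

open Matrix

/-- Squared Frobenius norm of a real matrix. -/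
def frobSq {m n : ℕ} (M : Matrix (Fin m) (Fin n) ℝ) : ℝ := ∑ i, ∑ j, (M i j) ^ 2

/-- Nuclear norm: sum of the singular values, i.e. of the square roots of the
eigenvalues of `Zᴴ * Z`. -/
def nuclearNorm {m n : ℕ} (Z : Matrix (Fin m) (Fin n) ℝ) : ℝ :=
  ∑ i, Real.sqrt ((Matrix.isHermitian_conjTranspose_mul_self Z).eigenvalues i)

/-- `U * diagonal σ * Vᵀ` is a (thin) singular value decomposition of `X`, with the
singular values `σ` listed in decreasing order. -/
def IsThinSVD {m n p : ℕ} (X : Matrix (Fin m) (Fin n) ℝ) (U : Matrix (Fin m) (Fin p) ℝ)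
    (σ : Fin p → ℝ) (V : Matrix (Fin n) (Fin p) ℝ) : Prop :=
  X = U * Matrix.diagonal σ * Vᵀ ∧ Uᵀ * U = 1 ∧ Vᵀ * V = 1 ∧
    (∀ i, 0 ≤ σ i) ∧ Antitone σ

section RealAux
variable {l : ℝ}

lemma r3' : Real.sqrt (Real.sqrt l) * Real.sqrt (Real.sqrt l) = Real.sqrt l :=
  Real.mul_self_sqrt (Real.sqrt_nonneg l)

lemma rsne (hl : 0 ≤ l) (h : l ≠ 0) : Real.sqrt l ≠ 0 := by
  intro h0
  exact h (by rw [← Real.mul_self_sqrt hl, h0, mul_zero])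

lemma r1' (hl : 0 ≤ l) :
    (if l = 0 then 0 else Real.sqrt (Real.sqrt l) / Real.sqrt l) * l *
      (if l = 0 then 0 else Real.sqrt (Real.sqrt l) / Real.sqrt l) = Real.sqrt l := by
  split_ifs with h
  · simp [h]
  · have hs := rsne hl h
    have h1 := r3' (l := l)
    have h2 := Real.mul_self_sqrt hl
    field_simp
    nlinarith [Real.sqrt_nonneg l, Real.sqrt_nonneg (Real.sqrt l)]

lemma r2' (hl : 0 ≤ l) :
    (if l = 0 then 0 else Real.sqrt (Real.sqrt l) / Real.sqrt l) * Real.sqrt (Real.sqrt l)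
      = if l = 0 then (0:ℝ) else 1 := by
  split_ifs with h
  · simp
  · have hs := rsne hl h
    field_simp
    exact Real.sq_sqrt (Real.sqrt_nonneg l)

lemma r4' (hl : 0 ≤ l) :
    (if l = 0 then 0 else 1 / Real.sqrt l) * l * (if l = 0 then 0 else 1 / Real.sqrt l)
      = if l = 0 then (0:ℝ) else 1 := by
  split_ifs with h
  · simp
  · have hs := rsne hl h
    have h2 := Real.mul_self_sqrt hl
    field_simp
    exact (Real.sq_sqrt hl).symm

lemma r5' (hl : 0 ≤ l) :
    (if l = 0 then 0 else 1 / Real.sqrt l) * l * 1 = Real.sqrt l := by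
  split_ifs with h
  · simp [h]
  · rw [mul_one, one_div, inv_mul_eq_div, Real.div_sqrt]

lemma r6' : (if l = 0 then (0:ℝ) else 1) * (if l = 0 then 0 else 1 / Real.sqrt l)
    = if l = 0 then 0 else 1 / Real.sqrt l := by
  split_ifs with h <;> simp

lemma r7' : (1 - if l = 0 then (0:ℝ) else 1) * l * (1 - if l = 0 then (0:ℝ) else 1) = 0 := by
  split_ifs with h <;> simp [h]

end RealAux

lemma frobSq_nonneg {m n : ℕ} (M : Matrix (Fin m) (Fin n) ℝ) : 0 ≤ frobSq M :=
  Finset.sum_nonneg fun _ _ => Finset.sum_nonneg fun _ _ => sq_nonneg _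

lemma frobSq_eq_trace {m n : ℕ} (M : Matrix (Fin m) (Fin n) ℝ) :
    frobSq M = (Mᵀ * M).trace := by
  simp only [frobSq, Matrix.trace, Matrix.diag, Matrix.mul_apply, Matrix.transpose_apply, pow_two]
  exact Finset.sum_comm

lemma frobSq_eq_zero {m n : ℕ} {M : Matrix (Fin m) (Fin n) ℝ} (h : frobSq M = 0) : M = 0 := by
  ext i j
  have h1 : ∀ i ∈ Finset.univ, (0:ℝ) ≤ ∑ j, (M i j)^2 :=
    fun _ _ => Finset.sum_nonneg fun _ _ => sq_nonneg _
  have h2 := (Finset.sum_eq_zero_iff_of_nonneg h1).mp h i (Finset.mem_univ i)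
  have h3 := (Finset.sum_eq_zero_iff_of_nonneg (fun k _ => sq_nonneg (M i k))).mp h2 j
    (Finset.mem_univ j)
  simpa using pow_eq_zero_iff (n := 2) (by norm_num) |>.mp h3

lemma contract {m p q : ℕ} (U : Matrix (Fin m) (Fin p) ℝ) (A : Matrix (Fin m) (Fin q) ℝ)
    (h : Uᵀ * U * Uᵀ = Uᵀ) : frobSq (Uᵀ * A) ≤ frobSq A := by
  set P : Matrix (Fin m) (Fin m) ℝ := 1 - U * Uᵀ with hP
  have hPt : Pᵀ = P := by
    simp [hP, Matrix.transpose_sub, Matrix.transpose_mul]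
  have hP2 : P * P = P := by
    have : U * Uᵀ * (U * Uᵀ) = U * Uᵀ := by
      rw [Matrix.mul_assoc, ← Matrix.mul_assoc Uᵀ U Uᵀ, h]
    simp only [hP, Matrix.sub_mul, Matrix.mul_sub, Matrix.one_mul, Matrix.mul_one, this]
    abel
  have key : frobSq A - frobSq (Uᵀ * A) = frobSq (P * A) := by
    rw [frobSq_eq_trace A, frobSq_eq_trace (Uᵀ * A), frobSq_eq_trace (P * A)]
    have e1 : (P * A)ᵀ * (P * A) = Aᵀ * (P * A) := by
      rw [Matrix.transpose_mul, hPt, Matrix.mul_assoc, ← Matrix.mul_assoc P P A, hP2]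
    rw [e1, hP, Matrix.sub_mul, Matrix.mul_sub, Matrix.one_mul, Matrix.trace_sub]
    congr 1
    rw [Matrix.transpose_mul, Matrix.transpose_transpose]
    rw [Matrix.mul_assoc, Matrix.mul_assoc]
  nlinarith [frobSq_nonneg (P * A)]

lemma trace_le_half {a b : ℕ} (M N : Matrix (Fin a) (Fin b) ℝ) :
    (M * Nᵀ).trace ≤ (1/2) * (frobSq M + frobSq N) := by
  have : (M * Nᵀ).trace = ∑ i, ∑ j, M i j * N i j := by
    simp [Matrix.trace, Matrix.diag, Matrix.mul_apply]
  rw [this, frobSq, frobSq, ← Finset.sum_add_distrib, Finset.mul_sum]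
  apply Finset.sum_le_sum
  intro i _
  rw [← Finset.sum_add_distrib, Finset.mul_sum]
  apply Finset.sum_le_sum
  intro j _
  nlinarith [sq_nonneg (M i j - N i j)]

lemma key_lb {m n p q : ℕ} (Z : Matrix (Fin m) (Fin n) ℝ)
    (A : Matrix (Fin m) (Fin q) ℝ) (B : Matrix (Fin n) (Fin q) ℝ)
    (U : Matrix (Fin m) (Fin p) ℝ) (V : Matrix (Fin n) (Fin p) ℝ)
    (hZ : Z = A * Bᵀ) (hU : Uᵀ * U * Uᵀ = Uᵀ) (hV : Vᵀ * V * Vᵀ = Vᵀ) :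
    (Uᵀ * Z * V).trace ≤ (1/2) * (frobSq A + frobSq B) := by
  have e : Uᵀ * Z * V = (Uᵀ * A) * (Vᵀ * B)ᵀ := by
    rw [hZ, Matrix.transpose_mul, Matrix.transpose_transpose, ← Matrix.mul_assoc,
      ← Matrix.mul_assoc, Matrix.mul_assoc (Uᵀ * A)]
  rw [e]
  calc ((Uᵀ * A) * (Vᵀ * B)ᵀ).trace ≤ (1/2) * (frobSq (Uᵀ * A) + frobSq (Vᵀ * B)) :=
        trace_le_half _ _
    _ ≤ (1/2) * (frobSq A + frobSq B) := by
        have := contract U A hU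
        have := contract V B hV
        linarith

lemma sum_pad {p r : ℕ} (f : Fin p → ℝ) (hf : ∀ j : Fin p, r ≤ (j:ℕ) → f j = 0) :
    ∑ j : Fin r, (if h : (j:ℕ) < p then f ⟨j, h⟩ else 0) = ∑ j : Fin p, f j := by
  have e1 : ∑ j : Fin r, (if h : (j:ℕ) < p then f ⟨j, h⟩ else 0)
      = ∑ j ∈ Finset.range r, (if h : j < p then f ⟨j, h⟩ else 0) :=
    Fin.sum_univ_eq_sum_range (fun j => if h : j < p then f ⟨j, h⟩ else 0) r
  have e2 : ∑ j : Fin p, f j = ∑ j ∈ Finset.range p, (if h : j < p then f ⟨j, h⟩ else 0) := by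
    rw [← Fin.sum_univ_eq_sum_range]
    exact Finset.sum_congr rfl fun j _ => by rw [dif_pos j.isLt]
  rw [e1, e2]
  have hF0 : ∀ j, min r p ≤ j → (if h : j < p then f ⟨j, h⟩ else 0) = 0 := by
    intro j hj
    by_cases h : j < p
    · rw [dif_pos h]
      exact hf ⟨j, h⟩ (by simp only [Fin.val_mk]; omega)
    · rw [dif_neg h]
  have g1 := Finset.sum_subset (Finset.range_subset_range.mpr (min_le_left r p))
    (f := fun j => if h : j < p then f ⟨j, h⟩ else 0)
    (fun x hx hnx => hF0 x (by simp only [Finset.mem_range, not_lt] at hnx; exact hnx))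
  have g2 := Finset.sum_subset (Finset.range_subset_range.mpr (min_le_right r p))
    (f := fun j => if h : j < p then f ⟨j, h⟩ else 0)
    (fun x hx hnx => hF0 x (by simp only [Finset.mem_range, not_lt] at hnx; exact hnx))
  rw [← g1, ← g2]

theorem nuclearNorm_eq_min_factorization {m n r : ℕ} (Z : Matrix (Fin m) (Fin n) ℝ)
    (hr : Z.rank ≤ r)
    (U : Matrix (Fin m) (Fin (min m n)) ℝ) (σ : Fin (min m n) → ℝ)
    (V : Matrix (Fin n) (Fin (min m n)) ℝ) (hSVD : IsThinSVD Z U σ V) :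
    -- ‖Z‖_* is the minimum of (1/2)(‖A‖_F² + ‖B‖_F²) over factorizations Z = ABᵀ
    IsLeast {c : ℝ | ∃ A : Matrix (Fin m) (Fin r) ℝ, ∃ B : Matrix (Fin n) (Fin r) ℝ,
        Z = A * Bᵀ ∧ c = (1 / 2) * (frobSq A + frobSq B)} (nuclearNorm Z) ∧
    -- equality holds at A = U D^{1/2}, B = V D^{1/2} where U D Vᵀ is an SVD of Z
    (U * Matrix.diagonal fun i => Real.sqrt (σ i)) *
        (V * Matrix.diagonal fun i => Real.sqrt (σ i))ᵀ = Z ∧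
    nuclearNorm Z = (1 / 2) * (frobSq (U * Matrix.diagonal fun i => Real.sqrt (σ i)) +
        frobSq (V * Matrix.diagonal fun i => Real.sqrt (σ i))) := by
  obtain ⟨hZf, hUo, hVo, hσ0, hmono⟩ := hSVD
  -- the σ-side factorization
  have hdd : (Matrix.diagonal fun i => Real.sqrt (σ i)) * (Matrix.diagonal fun i => Real.sqrt (σ i))
      = Matrix.diagonal σ := by
    rw [Matrix.diagonal_mul_diagonal]
    exact congrArg Matrix.diagonal (funext fun i => Real.mul_self_sqrt (hσ0 i))
  have hA₂B₂ : (U * Matrix.diagonal fun i => Real.sqrt (σ i)) *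
      (V * Matrix.diagonal fun i => Real.sqrt (σ i))ᵀ = Z := by
    rw [Matrix.transpose_mul, Matrix.diagonal_transpose, hZf,
      Matrix.mul_assoc, ← Matrix.mul_assoc (Matrix.diagonal _), hdd, ← Matrix.mul_assoc]
  have hfA₂ : frobSq (U * Matrix.diagonal fun i => Real.sqrt (σ i)) = ∑ i, σ i := by
    rw [frobSq_eq_trace, Matrix.transpose_mul, Matrix.diagonal_transpose,
      Matrix.mul_assoc, ← Matrix.mul_assoc Uᵀ U, hUo, Matrix.one_mul, hdd, Matrix.trace_diagonal]
  have hfB₂ : frobSq (V * Matrix.diagonal fun i => Real.sqrt (σ i)) = ∑ i, σ i := by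
    rw [frobSq_eq_trace, Matrix.transpose_mul, Matrix.diagonal_transpose,
      Matrix.mul_assoc, ← Matrix.mul_assoc Vᵀ V, hVo, Matrix.one_mul, hdd, Matrix.trace_diagonal]
  have hUZV : Uᵀ * Z * V = Matrix.diagonal σ := by
    rw [hZf]
    simp only [Matrix.mul_assoc]
    rw [hVo, Matrix.mul_one, ← Matrix.mul_assoc, hUo, Matrix.one_mul]
  -- spectral setup
  have hM := Matrix.isHermitian_conjTranspose_mul_self Z
  set lam := hM.eigenvalues with hlamdef
  set W : Matrix (Fin n) (Fin n) ℝ :=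
    (Matrix.IsHermitian.eigenvectorUnitary hM : Matrix (Fin n) (Fin n) ℝ) with hWdef
  have hZt : Zᴴ = Zᵀ := Matrix.conjTranspose_eq_transpose_of_trivial Z
  have hWW : Wᵀ * W = 1 := by
    have := (Matrix.mem_unitaryGroup_iff').mp (Matrix.IsHermitian.eigenvectorUnitary hM).2
    rw [hWdef]
    simpa [Matrix.star_eq_conjTranspose, Matrix.conjTranspose_eq_transpose_of_trivial] using this
  have hWW' : W * Wᵀ = 1 := by
    have := (Matrix.mem_unitaryGroup_iff).mp (Matrix.IsHermitian.eigenvectorUnitary hM).2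
    rw [hWdef]
    simpa [Matrix.star_eq_conjTranspose, Matrix.conjTranspose_eq_transpose_of_trivial] using this
  have hlam0 : ∀ i, 0 ≤ lam i := fun i =>
    (Matrix.posSemidef_conjTranspose_mul_self Z).eigenvalues_nonneg i
  have hspec : Wᵀ * (Zᵀ * Z) * W = Matrix.diagonal lam := by
    rw [← hZt]
    have := hM.conjStarAlgAut_star_eigenvectorUnitary
    rw [Unitary.conjStarAlgAut_star_apply] at this
    rw [hWdef, hlamdef]
    simpa [Matrix.star_eq_conjTranspose, Matrix.conjTranspose_eq_transpose_of_trivial] using this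
  have hX : ∀ {q : ℕ} (Y : Matrix (Fin n) (Fin q) ℝ),
      Zᵀ * (Z * (W * Y)) = W * (Matrix.diagonal lam * Y) := by
    intro q Y
    have hd : Zᵀ * Z * W = W * Matrix.diagonal lam := by
      calc Zᵀ * Z * W = (W * Wᵀ) * (Zᵀ * Z) * W := by rw [hWW', Matrix.one_mul]
        _ = W * (Wᵀ * (Zᵀ * Z) * W) := by
            rw [Matrix.mul_assoc W Wᵀ (Zᵀ * Z), Matrix.mul_assoc]
        _ = W * Matrix.diagonal lam := by rw [hspec]
    rw [← Matrix.mul_assoc, ← Matrix.mul_assoc, hd, Matrix.mul_assoc]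
  have hcore : ∀ c d : Fin n → ℝ,
      (Z * W * Matrix.diagonal c)ᵀ * (Z * W * Matrix.diagonal d)
        = Matrix.diagonal (fun i => c i * lam i * d i) := by
    intro c d
    simp only [Matrix.transpose_mul, Matrix.diagonal_transpose, Matrix.mul_assoc]
    rw [hX (Matrix.diagonal d), ← Matrix.mul_assoc Wᵀ W, hWW, Matrix.one_mul,
      Matrix.diagonal_mul_diagonal, Matrix.diagonal_mul_diagonal]
    exact congrArg _ (funext fun i => (mul_assoc _ _ _).symm)
  have hNZ : nuclearNorm Z = ∑ i, Real.sqrt (lam i) := rfl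
  -- Z * W * diagonal e = Z * W
  have hZWe : Z * W * Matrix.diagonal (fun i => if lam i = 0 then (0:ℝ) else 1) = Z * W := by
    have hT : Z * W * Matrix.diagonal (fun i => 1 - if lam i = 0 then (0:ℝ) else 1) = 0 := by
      apply frobSq_eq_zero
      rw [frobSq_eq_trace, hcore, Matrix.trace_diagonal]
      exact Finset.sum_eq_zero fun i _ => r7'
    have hsplit : Matrix.diagonal (fun i => 1 - if lam i = 0 then (0:ℝ) else 1)
        = 1 - Matrix.diagonal (fun i => if lam i = 0 then (0:ℝ) else 1) := by
      ext a b
      rcases eq_or_ne a b with h | h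
      · subst h
        simp [Matrix.diagonal_apply_eq, Matrix.sub_apply, Matrix.one_apply_eq]
      · simp [Matrix.diagonal_apply_ne _ h, Matrix.sub_apply, Matrix.one_apply_ne h]
    rw [hsplit, Matrix.mul_sub, Matrix.mul_one, sub_eq_zero] at hT
    exact hT.symm
  -- the lam-side factorization
  have hA₁B₁ : Z = (Z * W * Matrix.diagonal
        (fun i => if lam i = 0 then 0 else Real.sqrt (Real.sqrt (lam i)) / Real.sqrt (lam i))) *
      (W * Matrix.diagonal (fun i => Real.sqrt (Real.sqrt (lam i))))ᵀ := by
    rw [Matrix.transpose_mul, Matrix.diagonal_transpose, ← Matrix.mul_assoc,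
      Matrix.mul_assoc (Z * W), Matrix.diagonal_mul_diagonal]
    have h0 : (fun i => (if lam i = 0 then 0 else Real.sqrt (Real.sqrt (lam i)) / Real.sqrt (lam i))
        * Real.sqrt (Real.sqrt (lam i))) = fun i => if lam i = 0 then (0:ℝ) else 1 :=
      funext fun i => r2' (hlam0 i)
    rw [h0, hZWe, Matrix.mul_assoc, hWW', Matrix.mul_one]
  have hfA₁ : frobSq (Z * W * Matrix.diagonal
        (fun i => if lam i = 0 then 0 else Real.sqrt (Real.sqrt (lam i)) / Real.sqrt (lam i)))
      = ∑ i, Real.sqrt (lam i) := by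
    rw [frobSq_eq_trace, hcore, Matrix.trace_diagonal]
    exact Finset.sum_congr rfl fun i _ => r1' (hlam0 i)
  have hfB₁ : frobSq (W * Matrix.diagonal (fun i => Real.sqrt (Real.sqrt (lam i))))
      = ∑ i, Real.sqrt (lam i) := by
    rw [frobSq_eq_trace, Matrix.transpose_mul, Matrix.diagonal_transpose, Matrix.mul_assoc,
      ← Matrix.mul_assoc Wᵀ W, hWW, Matrix.one_mul, Matrix.diagonal_mul_diagonal,
      Matrix.trace_diagonal]
    exact Finset.sum_congr rfl fun i _ => r3'
  -- the projection-like matrix U' = Z * W * diagonal γ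
  have hU'T : (Z * W * Matrix.diagonal (fun i => if lam i = 0 then (0:ℝ) else 1 / Real.sqrt (lam i)))ᵀ
      = Matrix.diagonal (fun i => if lam i = 0 then (0:ℝ) else 1 / Real.sqrt (lam i)) * (Wᵀ * Zᵀ) := by
    rw [Matrix.transpose_mul, Matrix.transpose_mul, Matrix.diagonal_transpose]
  have hU'o : (Z * W * Matrix.diagonal (fun i => if lam i = 0 then (0:ℝ) else 1 / Real.sqrt (lam i)))ᵀ
        * (Z * W * Matrix.diagonal (fun i => if lam i = 0 then (0:ℝ) else 1 / Real.sqrt (lam i)))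
        * (Z * W * Matrix.diagonal (fun i => if lam i = 0 then (0:ℝ) else 1 / Real.sqrt (lam i)))ᵀ
      = (Z * W * Matrix.diagonal (fun i => if lam i = 0 then (0:ℝ) else 1 / Real.sqrt (lam i)))ᵀ := by
    rw [hcore, hU'T, ← Matrix.mul_assoc, Matrix.diagonal_mul_diagonal]
    have h0 : (fun i => ((if lam i = 0 then (0:ℝ) else 1 / Real.sqrt (lam i)) * lam i *
          (if lam i = 0 then (0:ℝ) else 1 / Real.sqrt (lam i))) *
          (if lam i = 0 then (0:ℝ) else 1 / Real.sqrt (lam i)))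
        = fun i => if lam i = 0 then (0:ℝ) else 1 / Real.sqrt (lam i) :=
      funext fun i => by rw [r4' (hlam0 i)]; exact r6'
    rw [h0]
  have hWo : Wᵀ * W * Wᵀ = Wᵀ := by rw [hWW, Matrix.one_mul]
  have hUo3 : Uᵀ * U * Uᵀ = Uᵀ := by rw [hUo, Matrix.one_mul]
  have hVo3 : Vᵀ * V * Vᵀ = Vᵀ := by rw [hVo, Matrix.one_mul]
  have htrU' : ((Z * W * Matrix.diagonal (fun i => if lam i = 0 then (0:ℝ) else 1 / Real.sqrt (lam i)))ᵀ
      * Z * W).trace = ∑ i, Real.sqrt (lam i) := by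
    have h1 : (Z * W * Matrix.diagonal (fun i => if lam i = 0 then (0:ℝ) else 1 / Real.sqrt (lam i)))ᵀ
        * Z * W
        = (Z * W * Matrix.diagonal (fun i => if lam i = 0 then (0:ℝ) else 1 / Real.sqrt (lam i)))ᵀ
          * (Z * W * Matrix.diagonal (fun _ : Fin n => (1:ℝ))) := by
      rw [Matrix.diagonal_one, Matrix.mul_one, Matrix.mul_assoc]
    rw [h1, hcore, Matrix.trace_diagonal]
    exact Finset.sum_congr rfl fun i _ => r5' (hlam0 i)
  -- generic lower bound
  have hNle : ∀ {q : ℕ} (A : Matrix (Fin m) (Fin q) ℝ) (B : Matrix (Fin n) (Fin q) ℝ),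
      Z = A * Bᵀ → ∑ i, Real.sqrt (lam i) ≤ (1/2) * (frobSq A + frobSq B) := by
    intro q A B hAB
    have := key_lb Z A B
      (Z * W * Matrix.diagonal (fun i => if lam i = 0 then (0:ℝ) else 1 / Real.sqrt (lam i))) W
      hAB hU'o hWo
    rwa [htrU'] at this
  -- nuclearNorm Z = ∑ σ
  have hsum1 : ∑ i, Real.sqrt (lam i) ≤ ∑ i, σ i := by
    have := hNle _ _ hA₂B₂.symm
    rw [hfA₂, hfB₂] at this
    linarith
  have hsum2 : ∑ i, σ i ≤ ∑ i, Real.sqrt (lam i) := by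
    have := key_lb Z _ _ U V hA₁B₁ hUo3 hVo3
    rw [hUZV, Matrix.trace_diagonal, hfA₁, hfB₁] at this
    linarith
  have hNσ : nuclearNorm Z = ∑ i, σ i := hNZ.trans (le_antisymm hsum1 hsum2)
  -- rank considerations: σ vanishes from index r on
  have hσr : ∀ j : Fin (min m n), r ≤ (j:ℕ) → σ j = 0 := by
    classical
    have h1 : (Matrix.diagonal σ).rank ≤ Z.rank := by
      rw [← hUZV]
      exact le_trans (Matrix.rank_mul_le_left (Uᵀ * Z) V) (Matrix.rank_mul_le_right Uᵀ Z)
    rw [Matrix.rank_diagonal] at h1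
    have hcard : Fintype.card {i // σ i ≠ 0} ≤ r := le_trans h1 hr
    intro j hj
    by_contra hne
    have hpos : ∀ i : Fin (min m n), (i:ℕ) ≤ (j:ℕ) → σ i ≠ 0 := by
      intro i hij
      have hle : σ j ≤ σ i := hmono (by exact hij)
      have : 0 < σ j := lt_of_le_of_ne (hσ0 j) (Ne.symm hne)
      exact ne_of_gt (lt_of_lt_of_le this hle)
    have hinj : Function.Injective (fun i : Fin ((j:ℕ)+1) =>
        (⟨⟨(i:ℕ), lt_of_le_of_lt (Nat.le_of_lt_succ i.isLt) j.isLt⟩,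
          hpos _ (Nat.le_of_lt_succ i.isLt)⟩ : {i // σ i ≠ 0})) := by
      intro a b hab
      have : (a:ℕ) = (b:ℕ) := congrArg (fun x => ((x : {i // σ i ≠ 0}) : Fin (min m n)).1) hab
      exact Fin.ext this
    have := Fintype.card_le_of_injective _ hinj
    rw [Fintype.card_fin] at this
    omega
  have hA₂z : ∀ (j : Fin (min m n)), r ≤ (j:ℕ) →
      ∀ i, (U * Matrix.diagonal fun i => Real.sqrt (σ i)) i j = 0 := by
    intro j hj i
    rw [Matrix.mul_diagonal, hσr j hj, Real.sqrt_zero, mul_zero]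
  have hB₂z : ∀ (j : Fin (min m n)), r ≤ (j:ℕ) →
      ∀ i, (V * Matrix.diagonal fun i => Real.sqrt (σ i)) i j = 0 := by
    intro j hj i
    rw [Matrix.mul_diagonal, hσr j hj, Real.sqrt_zero, mul_zero]
  refine ⟨⟨?_, ?_⟩, hA₂B₂, by rw [hNσ, hfA₂, hfB₂]; ring⟩
  · -- membership
    refine ⟨(fun i j => if h : (j:ℕ) < min m n
        then (U * Matrix.diagonal fun i : Fin (min m n) => Real.sqrt (σ i)) i ⟨j, h⟩ else 0),
      (fun i j => if h : (j:ℕ) < min m n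
        then (V * Matrix.diagonal fun i : Fin (min m n) => Real.sqrt (σ i)) i ⟨j, h⟩ else 0), ?_, ?_⟩
    · rw [← hA₂B₂]
      ext i k
      rw [Matrix.mul_apply]
      refine Eq.trans ?_ (Matrix.mul_apply).symm
      simp only [Matrix.transpose_apply]
      rw [← sum_pad (fun j => (U * Matrix.diagonal fun i => Real.sqrt (σ i)) i j *
          (V * Matrix.diagonal fun i => Real.sqrt (σ i)) k j)
        (fun j hj => by simp only [hA₂z j hj i, zero_mul])]
      apply Finset.sum_congr rfl
      intro j _
      by_cases h : (j:ℕ) < min m n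
      · simp only [dif_pos h]
        exact congrArg (HMul.hMul _) (dif_pos (e := fun _ => (0:ℝ))
          (t := fun h => (V * Matrix.diagonal fun i => Real.sqrt (σ i)) k ⟨j, h⟩) h).symm
      · simp only [dif_neg h, zero_mul]
    · -- value
      have hfrA : frobSq (fun (i : Fin m) (j : Fin r) => if h : (j:ℕ) < min m n
          then (U * Matrix.diagonal fun i => Real.sqrt (σ i)) i ⟨j, h⟩ else 0)
          = frobSq (U * Matrix.diagonal fun i => Real.sqrt (σ i)) := by
        simp only [frobSq]
        apply Finset.sum_congr rfl
        intro i _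
        rw [← sum_pad (fun j => ((U * Matrix.diagonal fun i => Real.sqrt (σ i)) i j)^2)
          (fun j hj => by simp [hA₂z j hj i])]
        apply Finset.sum_congr rfl
        intro j _
        by_cases h : (j:ℕ) < min m n
        · simp only [dif_pos h]
        · simp only [dif_neg h]
          exact zero_pow two_ne_zero
      have hfrB : frobSq (fun (i : Fin n) (j : Fin r) => if h : (j:ℕ) < min m n
          then (V * Matrix.diagonal fun i => Real.sqrt (σ i)) i ⟨j, h⟩ else 0)
          = frobSq (V * Matrix.diagonal fun i => Real.sqrt (σ i)) := by
        simp only [frobSq]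
        apply Finset.sum_congr rfl
        intro i _
        rw [← sum_pad (fun j => ((V * Matrix.diagonal fun i => Real.sqrt (σ i)) i j)^2)
          (fun j hj => by simp [hB₂z j hj i])]
        apply Finset.sum_congr rfl
        intro j _
        by_cases h : (j:ℕ) < min m n
        · simp only [dif_pos h]
        · simp only [dif_neg h]
          exact zero_pow two_ne_zero
      rw [hfrA, hfrB, hfA₂, hfB₂, hNσ]
      ring
  · -- lower bound
    rintro c ⟨A, B, hAB, rfl⟩
    rw [hNZ]
    exact hNle A B hAB
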